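/- arXiv:2207.08705 — 2 statements merged into one kernel-verified Lean document; each statement's English description precedes it below -/
import Mathlib

section
/- Let ω ∈ ℝ be such that e^{2πiω} ≠ 1, and let u : ℝ → ℂ be a continuously differentiable 2π-periodic function. Then for every t ∈ ℝ, |u(t)| ≤ (2π/|e^{2πiω} − 1|)·sup_{s ∈ [0,2π]} |u'(s) + iω·u(s)|. -/
open Complex intervalIntegral

/-- Poincaré-type estimate on the circle for the off-diagonal components: if
`e^{2πiω} ≠ 1` and `u : ℝ → ℂ` is continuously differentiable and `2π`-periodic, then
`|u(t)| ≤ (2π/|e^{2πiω} - 1|) · sup_{s ∈ [0,2π]} |u'(s) + iω u(s)|` for every `t`. -/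
theorem poincare_estimate_twisted
    (ω : ℝ) (hω : Complex.exp (2 * Real.pi * Complex.I * ω) ≠ 1)
    (u : ℝ → ℂ) (hu : ContDiff ℝ 1 u) (hper : Function.Periodic u (2 * Real.pi)) :
    ∀ t : ℝ,
      ‖u t‖ ≤ (2 * Real.pi / ‖Complex.exp (2 * Real.pi * Complex.I * ω) - 1‖) *
        ⨆ s : Set.Icc (0:ℝ) (2 * Real.pi), ‖deriv u s.1 + Complex.I * ω * u s.1‖ := by
  intro t
  have hπ : (0:ℝ) < 2 * Real.pi := by positivity
  set f : ℝ → ℂ := fun s => deriv u s + Complex.I * ω * u s with hf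
  have hderiv_cont : Continuous (deriv u) := hu.continuous_deriv le_rfl
  have hfc : Continuous f := by
    exact hderiv_cont.add (continuous_const.mul hu.continuous)
  -- deriv u is periodic
  have hdper : Function.Periodic (deriv u) (2 * Real.pi) := by
    intro x
    have : (fun y => u (y + 2 * Real.pi)) = u := funext fun y => hper y
    calc deriv u (x + 2 * Real.pi) = deriv (fun y => u (y + 2 * Real.pi)) x :=
          (deriv_comp_add_const u (2*Real.pi) x).symm
      _ = deriv u x := by rw [this]
  have hfper : Function.Periodic f (2 * Real.pi) := fun x => by
    simp only [hf, hdper x, hper x]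
  -- sup bound
  set M : ℝ := ⨆ s : Set.Icc (0:ℝ) (2 * Real.pi), ‖f s.1‖ with hM
  have hbdd : BddAbove (Set.range fun s : Set.Icc (0:ℝ) (2 * Real.pi) => ‖f s.1‖) := by
    have : IsCompact (Set.Icc (0:ℝ) (2 * Real.pi)) := isCompact_Icc
    obtain ⟨C, hC⟩ := (this.image_of_continuousOn hfc.norm.continuousOn).bddAbove
    exact ⟨C, by rintro _ ⟨s, rfl⟩; exact hC ⟨s.1, s.2, rfl⟩⟩
  have hMle : ∀ s : ℝ, ‖f s‖ ≤ M := by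
    intro s
    obtain ⟨y, hy, hys⟩ := (hfper.comp norm).exists_mem_Ico₀ hπ s
    replace hys : ‖f s‖ = ‖f y‖ := hys
    rw [hys]
    exact le_ciSup hbdd ⟨y, hy.1, hy.2.le⟩
  -- the twisted function v
  set E : ℝ → ℂ := fun s => Complex.exp (Complex.I * ω * s) with hE
  have hEd : ∀ s : ℝ, HasDerivAt E (Complex.I * ω * E s) s := by
    intro s
    have h1 : HasDerivAt (fun s : ℝ => (s : ℂ)) 1 s := by
      simpa using (hasDerivAt_id s).ofReal_comp
    have h2 : HasDerivAt (fun s : ℝ => Complex.I * ω * (s : ℂ)) (Complex.I * ω) s := by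
      simpa using h1.const_mul (Complex.I * ω)
    have := h2.cexp
    simpa [hE, mul_comm] using this
  set v : ℝ → ℂ := fun s => E s * u s with hv
  have hvd : ∀ s : ℝ, HasDerivAt v (E s * f s) s := by
    intro s
    have hu' : HasDerivAt u (deriv u s) s := (hu.differentiable one_ne_zero s).hasDerivAt
    have := (hEd s).fun_mul hu'
    refine this.congr_deriv ?_
    show Complex.I * ω * E s * u s + E s * deriv u s = E s * (deriv u s + Complex.I * ω * u s)
    ring
  -- fundamental theorem
  have hInt : v (t + 2 * Real.pi) - v t = ∫ s in t..(t + 2 * Real.pi), E s * f s := by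
    rw [intervalIntegral.integral_eq_sub_of_hasDerivAt (fun s _ => hvd s)]
    exact ((Complex.continuous_exp.comp (by continuity)).mul hfc).intervalIntegrable _ _
  have hEnorm : ∀ s : ℝ, ‖E s‖ = 1 := by
    intro s
    simp only [hE, Complex.norm_exp]
    norm_num [mul_comm, mul_assoc]
  have hEper : E (t + 2 * Real.pi) = Complex.exp (2 * Real.pi * Complex.I * ω) * E t := by
    simp only [hE]
    rw [← Complex.exp_add]
    push_cast
    ring_nf
  have key : (Complex.exp (2 * Real.pi * Complex.I * ω) - 1) * v t
      = ∫ s in t..(t + 2 * Real.pi), E s * f s := by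
    rw [← hInt]
    have : v (t + 2 * Real.pi) = Complex.exp (2 * Real.pi * Complex.I * ω) * v t := by
      simp only [hv, hEper, hper t]
      ring
    rw [this]; ring
  have hnorm : ‖Complex.exp (2 * Real.pi * Complex.I * ω) - 1‖ * ‖u t‖ ≤ M * (2 * Real.pi) := by
    have h1 : ‖(Complex.exp (2 * Real.pi * Complex.I * ω) - 1) * v t‖
        = ‖Complex.exp (2 * Real.pi * Complex.I * ω) - 1‖ * ‖u t‖ := by
      rw [norm_mul, hv]
      simp only [norm_mul, hEnorm t, one_mul]
    have h2 : ‖∫ s in t..(t + 2 * Real.pi), E s * f s‖ ≤ M * |t + 2 * Real.pi - t| := by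
      apply intervalIntegral.norm_integral_le_of_norm_le_const
      intro x _
      rw [norm_mul, hEnorm x, one_mul]
      exact hMle x
    rw [← h1, key]
    calc ‖∫ s in t..(t + 2 * Real.pi), E s * f s‖ ≤ M * |t + 2 * Real.pi - t| := h2
      _ = M * (2 * Real.pi) := by rw [show t + 2 * Real.pi - t = 2 * Real.pi by ring,
          abs_of_pos hπ]
  have hc : (0:ℝ) < ‖Complex.exp (2 * Real.pi * Complex.I * ω) - 1‖ := by
    rw [norm_pos_iff]; exact sub_ne_zero.mpr hω
  rw [div_mul_eq_mul_div, le_div_iff₀ hc]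
  calc ‖u t‖ * ‖Complex.exp (2 * Real.pi * Complex.I * ω) - 1‖
      = ‖Complex.exp (2 * Real.pi * Complex.I * ω) - 1‖ * ‖u t‖ := by ring
    _ ≤ M * (2 * Real.pi) := hnorm
    _ = 2 * Real.pi * M := by ring
end

section
/- Let p₁, …, pₙ ∈ ℝ³ be distinct points, a₁, …, aₙ ∈ ℝ³ vectors and ψ₁, …, ψₙ ∈ ℝ scalars. Suppose that for every x ∈ ℝ³∖{p₁,…,pₙ}: Σ_{j=1}^{n} (ψ_j·(x − p_j) − a_j × (x − p_j))/|x − p_j|³ = 0 and Σ_{j=1}^{n} a_j·(x − p_j)/|x − p_j|³ = 0, where × and · denote the cross and dot products of ℝ³. Then a_j = 0 and ψ_j = 0 for every j = 1, …, n. -/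
noncomputable section

/-- The Euclidean norm of a vector in `ℝ³` (realised as `Fin 3 → ℝ`). -/
def enorm3 (y : Fin 3 → ℝ) : ℝ := Real.sqrt (∑ i, y i ^ 2)

/-- The dot product on `ℝ³`. -/
def dot3 (y z : Fin 3 → ℝ) : ℝ := ∑ i, y i * z i

lemma enorm3_pos {y : Fin 3 → ℝ} (hy : y ≠ 0) : 0 < enorm3 y := by
  apply Real.sqrt_pos.2
  obtain ⟨i, hi⟩ := Function.ne_iff.1 hy
  refine Finset.sum_pos' (fun i _ => sq_nonneg _) ⟨i, Finset.mem_univ i, ?_⟩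
  have h0 : y i ≠ 0 := by simpa using hi
  positivity

lemma continuous_enorm3 : Continuous enorm3 := by
  unfold enorm3
  exact Real.continuous_sqrt.comp (continuous_finset_sum _ fun i _ => (continuous_apply i).pow 2)

lemma enorm3_smul {t : ℝ} (ht : 0 ≤ t) (v : Fin 3 → ℝ) :
    enorm3 (t • v) = t * enorm3 v := by
  simp only [enorm3, Pi.smul_apply, smul_eq_mul, mul_pow, ← Finset.mul_sum]
  rw [Real.sqrt_mul (sq_nonneg t), Real.sqrt_sq ht]

/-- Rigidity of Coulomb-type fields: if the pair of equations
`Σ_j (ψ_j (x - p_j) - a_j × (x - p_j))/|x - p_j|³ = 0` and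
`Σ_j a_j · (x - p_j)/|x - p_j|³ = 0` hold for every `x ∈ ℝ³ ∖ {p₁,…,pₙ}`, with
`p₁, …, pₙ` distinct, then all the vectors `a_j` and scalars `ψ_j` vanish. -/
theorem coulomb_field_rigidity {n : ℕ} (p : Fin n → (Fin 3 → ℝ))
    (hp : Function.Injective p) (a : Fin n → (Fin 3 → ℝ)) (ψ : Fin n → ℝ)
    (h1 : ∀ x : Fin 3 → ℝ, (∀ j, x ≠ p j) →
      ∑ j, (enorm3 (x - p j) ^ 3)⁻¹ • (ψ j • (x - p j) - crossProduct (a j) (x - p j))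
        = 0)
    (h2 : ∀ x : Fin 3 → ℝ, (∀ j, x ≠ p j) →
      ∑ j, dot3 (a j) (x - p j) / enorm3 (x - p j) ^ 3 = 0) :
    ∀ j, a j = 0 ∧ ψ j = 0 := by
  intro k
  -- Key claim: for every nonzero `v`, `ψ k • v - a k × v = 0`.
  have key : ∀ v : Fin 3 → ℝ, v ≠ 0 → ψ k • v - crossProduct (a k) v = 0 := by
    intro v hv
    set w : Fin 3 → ℝ := ψ k • v - crossProduct (a k) v with hw
    set c : Fin 3 → ℝ := ((enorm3 v) ^ 3)⁻¹ • w with hc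
    -- the terms of the sum, rescaled by t²
    set term : Fin n → ℝ → (Fin 3 → ℝ) := fun j t =>
      (t ^ 2 * ((enorm3 (p k + t • v - p j)) ^ 3)⁻¹) •
        (ψ j • (p k + t • v - p j) - crossProduct (a j) (p k + t • v - p j)) with hterm
    set G : ℝ → (Fin 3 → ℝ) := fun t =>
      t ^ 2 • ∑ j, ((enorm3 (p k + t • v - p j)) ^ 3)⁻¹ •
        (ψ j • (p k + t • v - p j) - crossProduct (a j) (p k + t • v - p j)) with hG
    have hGeq : ∀ t, G t = ∑ j, term j t := by
      intro t
      rw [hG]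
      simp only [Finset.smul_sum, hterm, smul_smul]
    -- eventually, the point `p k + t • v` avoids all singularities
    have hdom : ∀ᶠ t in nhdsWithin (0:ℝ) (Set.Ioi 0), ∀ j, p k + t • v ≠ p j := by
      rw [Filter.eventually_all]
      intro j
      by_cases hjk : j = k
      · subst hjk
        filter_upwards [self_mem_nhdsWithin] with t ht
        intro hcontra
        have : t • v = 0 := by
          have := sub_eq_zero.2 hcontra
          simpa using this
        rcases smul_eq_zero.1 this with h | h
        · exact (ne_of_gt (Set.mem_Ioi.1 ht)) h
        · exact hv h
      · by_cases hex : ∃ t₀ : ℝ, t₀ • v = p j - p k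
        · obtain ⟨t₀, ht₀⟩ := hex
          have hne : ∀ᶠ t in nhdsWithin (0:ℝ) (Set.Ioi 0), t ≠ t₀ := by
            have h0 : (0:ℝ) ≠ t₀ := by
              intro h
              apply hp.ne (Ne.symm hjk)
              have : p j - p k = 0 := by rw [← ht₀, ← h, zero_smul]
              have := sub_eq_zero.1 this
              exact this.symm
            exact (eventually_ne_nhds h0).filter_mono nhdsWithin_le_nhds
          filter_upwards [hne] with t hne hcontra
          apply hne
          have h1' : t • v = p j - p k := by
            rw [← hcontra]; abel
          have : (t - t₀) • v = 0 := by
            rw [sub_smul, ht₀, h1', sub_self]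
          rcases smul_eq_zero.1 this with h | h
          · linarith [sub_eq_zero.1 h]
          · exact absurd h hv
        · filter_upwards with t hcontra
          exact hex ⟨t, by rw [← hcontra]; abel⟩
    -- G vanishes eventually
    have hG0 : ∀ᶠ t in nhdsWithin (0:ℝ) (Set.Ioi 0), G t = 0 := by
      filter_upwards [hdom] with t ht
      rw [hG]
      have := h1 (p k + t • v) ht
      simp only [add_sub_cancel_left] at this ⊢
      rw [this, smul_zero]
    -- each term tends to a limit
    have hterm_tendsto : ∀ j, Filter.Tendsto (term j) (nhdsWithin (0:ℝ) (Set.Ioi 0))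
        (nhds (if j = k then c else 0)) := by
      intro j
      by_cases hjk : j = k
      · rw [hjk, if_pos rfl]
        have heq : ∀ᶠ t in nhdsWithin (0:ℝ) (Set.Ioi 0), term k t = c := by
          filter_upwards [self_mem_nhdsWithin] with t (ht : t ∈ Set.Ioi 0)
          have ht' : (0:ℝ) < t := ht
          rw [hterm]
          simp only [add_sub_cancel_left]
          have h2' : ψ k • (t • v) - crossProduct (a k) (t • v) = t • w := by
            rw [hw, map_smul, smul_sub, smul_comm t (ψ k) v]
          rw [h2', enorm3_smul ht'.le, mul_pow, smul_smul, hc]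
          congr 1
          have hE : enorm3 v ≠ 0 := (enorm3_pos hv).ne'
          field_simp
        exact Filter.Tendsto.congr' (heq.mono fun t ht => ht.symm) tendsto_const_nhds
      · simp only [if_neg hjk]
        have hx : Continuous fun t : ℝ => p k + t • v - p j :=
          (continuous_const.add (continuous_id.smul continuous_const)).sub continuous_const
        have hwc : Continuous fun t : ℝ =>
            ψ j • (p k + t • v - p j) - crossProduct (a j) (p k + t • v - p j) :=
          Continuous.sub (f := fun t : ℝ => ψ j • (p k + t • v - p j))
            (g := fun t : ℝ => crossProduct (a j) (p k + t • v - p j))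
            ((continuous_const (y := ψ j)).smul hx)
            ((LinearMap.continuous_of_finiteDimensional (crossProduct (a j))).comp hx)
        have hne0 : enorm3 (p k + (0:ℝ) • v - p j) ≠ 0 := by
          apply (enorm3_pos _).ne'
          intro h
          have hpk : p k = p j := sub_eq_zero.1 (by simpa using h)
          exact hjk (hp hpk).symm
        have hscal : Filter.Tendsto
            (fun t : ℝ => t ^ 2 * ((enorm3 (p k + t • v - p j)) ^ 3)⁻¹)
            (nhdsWithin (0:ℝ) (Set.Ioi 0)) (nhds 0) := by
          have h1t : Filter.Tendsto (fun t : ℝ => t ^ 2) (nhdsWithin (0:ℝ) (Set.Ioi 0))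
              (nhds 0) := by
            have : Filter.Tendsto (fun t : ℝ => t ^ 2) (nhds 0) (nhds ((0:ℝ) ^ 2)) :=
              (continuous_pow 2).tendsto 0
            simpa using this.mono_left nhdsWithin_le_nhds
          have h2t : Filter.Tendsto (fun t : ℝ => ((enorm3 (p k + t • v - p j)) ^ 3)⁻¹)
              (nhdsWithin (0:ℝ) (Set.Ioi 0))
              (nhds ((enorm3 (p k + (0:ℝ) • v - p j) ^ 3)⁻¹)) := by
            apply Filter.Tendsto.inv₀
            · exact (((continuous_enorm3.comp hx).pow 3).tendsto 0).mono_left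
                nhdsWithin_le_nhds
            · exact pow_ne_zero 3 hne0
          simpa using h1t.mul h2t
        have hwt : Filter.Tendsto
            (fun t : ℝ => ψ j • (p k + t • v - p j) - crossProduct (a j) (p k + t • v - p j))
            (nhdsWithin (0:ℝ) (Set.Ioi 0))
            (nhds (ψ j • (p k + (0:ℝ) • v - p j) - crossProduct (a j) (p k + (0:ℝ) • v - p j))) :=
          (hwc.tendsto 0).mono_left nhdsWithin_le_nhds
        have hfin := hscal.smul hwt
        simp only [zero_smul] at hfin
        exact hfin
    -- hence G tends to c
    have hGc : Filter.Tendsto G (nhdsWithin (0:ℝ) (Set.Ioi 0)) (nhds c) := by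
      have hsum := tendsto_finset_sum Finset.univ (fun j _ => hterm_tendsto j)
      have : (∑ j, if j = k then c else 0) = c := by
        rw [Finset.sum_ite_eq' Finset.univ k (fun _ => c)]
        simp
      rw [← this]
      exact (hsum.congr (fun t => (hGeq t).symm))
    have hGzero : Filter.Tendsto G (nhdsWithin (0:ℝ) (Set.Ioi 0)) (nhds 0) :=
      Filter.Tendsto.congr' (hG0.mono fun t ht => ht.symm) tendsto_const_nhds
    have hc0 : c = 0 := tendsto_nhds_unique hGc hGzero
    have hinv : ((enorm3 v) ^ 3)⁻¹ ≠ 0 := inv_ne_zero (pow_ne_zero 3 (enorm3_pos hv).ne')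
    rcases smul_eq_zero.1 (hc ▸ hc0) with h | h
    · exact absurd h hinv
    · exact h
  -- now extract the result componentwise
  have e0 : (![1, 0, 0] : Fin 3 → ℝ) ≠ 0 := by
    intro h; have := congrFun h 0; simp at this
  have e1 : (![0, 1, 0] : Fin 3 → ℝ) ≠ 0 := by
    intro h; have := congrFun h 1; simp at this
  have k0 := key ![1, 0, 0] e0
  have k1 := key ![0, 1, 0] e1
  rw [cross_apply] at k0 k1
  have h00 := congrFun k0 0
  have h01 := congrFun k0 1
  have h02 := congrFun k0 2
  have h10 := congrFun k1 0
  have h12 := congrFun k1 2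
  simp [Matrix.cons_val_zero, Matrix.cons_val_one] at h00 h01 h02 h10 h12
  refine ⟨funext fun i => ?_, h00⟩
  fin_cases i <;> simp_all
end
end
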